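/- Let $c > 1$ and let $a : \mathbb{N} \to \mathbb{N}$ be a sequence of positive integers with $a(n+1) > c \cdot a(n)$ for all $n$. Let $s \ge 2$ and let $z_1 > z_2 > \cdots > z_s$ be positive integers. Then for any integers $b, d$ and any $N \ge 1$, the number of integer vectors $(y_1, \dots, y_s)$ with $|y_i| \le N$ satisfying both $|y_1 a(z_1) + \cdots + y_s a(z_s) + b| \le a(z_1)$ and $y_1 + \cdots + y_s + d = 0$ is at most $c'(s,c) \cdot N^{s-2}$ for some constant $c'(s,c)$ depending only on $s$ and $c$. -/

import Mathlib

/-- For a lacunary sequence `a` with ratio `c > 1` and `z 0 > z 1 > ⋯ > z (s-1) ≥ 1`,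
the number of integer vectors `y` with `|y i| ≤ N`, `|∑ y i * a (z i) + b| ≤ a (z 0)`
and `∑ y i + d = 0` is `O_{s,c}(N^(s-2))`. -/
theorem stmt1 (c : ℝ) (hc : 1 < c) (s : ℕ) (hs : 2 ≤ s) :
    ∃ κ : ℝ, ∀ (a : ℕ → ℕ), (∀ n, 0 < a n) → (∀ n, c * a n < a (n + 1)) →
      ∀ (z : Fin s → ℕ), StrictAnti z → (∀ i, 0 < z i) →
      ∀ (b d : ℤ) (N : ℕ), 1 ≤ N →
        (Set.ncard {y : Fin s → ℤ | (∀ i, |y i| ≤ (N : ℤ)) ∧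
            |(∑ i, y i * (a (z i) : ℤ)) + b| ≤ (a (z ⟨0, by omega⟩) : ℤ) ∧
            (∑ i, y i) + d = 0} : ℝ)
          ≤ κ * (N : ℝ) ^ (s - 2) := by
  classical
  have hc1 : (0:ℝ) < c - 1 := by linarith
  refine ⟨((⌈2 * c / (c - 1)⌉ : ℝ) + 2) * 3 ^ (s - 2), ?_⟩
  intro a ha hlac z hz hzpos b d N hN
  set K : ℤ := ⌈2 * c / (c - 1)⌉ + 1 with hKdef
  have hKnn : 0 ≤ K := by
    have h0 : (0:ℝ) ≤ 2 * c / (c - 1) := by positivity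
    have := Int.ceil_nonneg h0
    omega
  set i0 : Fin s := ⟨0, by omega⟩ with hi0def
  set il : Fin s := ⟨s - 1, by omega⟩ with hildef
  have hne : i0 ≠ il := by
    simp only [hi0def, hildef, ne_eq, Fin.mk.injEq]
    omega
  have hlt : i0 < il := by
    simp only [hi0def, hildef, Fin.mk_lt_mk]
    omega
  have hmono : StrictMono a := strictMono_nat_of_lt_succ fun n => by
    have h1 := hlac n
    have h2 := ha n
    have h3 : (0:ℝ) < a n := by exact_mod_cast h2
    have : (a n : ℝ) < a (n+1) := lt_of_le_of_lt (by nlinarith) h1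
    exact_mod_cast this
  have hzlt : z il < z i0 := hz hlt
  have hAposN : a (z il) < a (z i0) := hmono hzlt
  set A : ℤ := (a (z i0) : ℤ) - a (z il) with hAdef
  have hApos : 0 < A := by
    rw [hAdef, sub_pos]
    exact_mod_cast hAposN
  have hAposR : (0:ℝ) < (A:ℝ) := by exact_mod_cast hApos
  have hcA : c * (a (z il) : ℝ) < (a (z i0) : ℝ) := by
    have h1 := hlac (z il)
    have h2 : a (z il + 1) ≤ a (z i0) := hmono.monotone (by omega)
    have h2' : ((a (z il + 1)) : ℝ) ≤ a (z i0) := by exact_mod_cast h2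
    linarith
  have hAR : (A:ℝ) = (a (z i0):ℝ) - a (z il) := by rw [hAdef]; push_cast; ring
  have hAbig : (c - 1) * (a (z i0) : ℝ) < c * (A : ℝ) := by
    rw [hAR]; nlinarith
  set B : (Fin s → ℤ) → ℤ := fun v =>
    (∑ i, if i = i0 ∨ i = il then 0 else v i * ((a (z i) : ℤ) - a (z il))) + b - d * a (z il)
    with hBdef
  set m : (Fin s → ℤ) → ℤ := fun v => (-(a (z i0) : ℤ) - B v) / A with hmdef
  set w : (Fin s → ℤ) → Fin s → ℤ := fun y => Function.update (Function.update y il 0) i0 0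
    with hwdef
  have hw_eq : ∀ (y : Fin s → ℤ) i, i ≠ i0 → i ≠ il → w y i = y i := fun y i h1 h2 => by
    simp only [hwdef, Function.update_of_ne h1, Function.update_of_ne h2]
  have hw0 : ∀ y : Fin s → ℤ, w y i0 = 0 := fun y => by simp [hwdef]
  have hwl : ∀ y : Fin s → ℤ, w y il = 0 := fun y => by
    simp [hwdef, Function.update_of_ne (Ne.symm hne)]
  have hBw : ∀ y : Fin s → ℤ, B (w y) = B y := by
    intro y
    simp only [hBdef]
    congr 2
    refine Finset.sum_congr rfl fun i _ => ?_
    by_cases h : i = i0 ∨ i = il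
    · simp [h]
    · push_neg at h
      rw [hw_eq y i h.1 h.2]
  have hkey : ∀ y : Fin s → ℤ, (∑ i, y i) + d = 0 →
      y i0 * A + B y = (∑ i, y i * (a (z i) : ℤ)) + b := by
    intro y hsum
    have hsplit : (∑ i, y i * ((a (z i):ℤ) - a (z il)))
        = (y i0 * ((a (z i0):ℤ) - a (z il)) + y il * ((a (z il):ℤ) - a (z il)))
          + ∑ i, (if i = i0 ∨ i = il then 0 else y i * ((a (z i):ℤ) - a (z il))) := by
      rw [← Finset.sum_filter_add_sum_filter_not Finset.univ (fun i => i = i0 ∨ i = il)]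
      congr 1
      · have hf : Finset.univ.filter (fun i => i = i0 ∨ i = il) = {i0, il} := by
          ext i; simp
        rw [hf, Finset.sum_pair hne]
      · rw [Finset.sum_filter]
        exact Finset.sum_congr rfl fun i _ => by by_cases h : i = i0 ∨ i = il <;> simp [h]
    have hdist : (∑ i, y i * ((a (z i):ℤ) - a (z il)))
        = (∑ i, y i * (a (z i):ℤ)) - (∑ i, y i) * a (z il) := by
      rw [Finset.sum_mul, ← Finset.sum_sub_distrib]
      exact Finset.sum_congr rfl fun i _ => by ring
    simp only [hBdef, hAdef]
    have hs' : (∑ i, y i) = -d := by linarith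
    rw [hs'] at hdist
    linarith [hsplit, hdist]
  set T : Finset (ℤ × (Fin s → ℤ)) :=
    Finset.Icc 0 K ×ˢ Fintype.piFinset
      (fun i => if i = i0 ∨ i = il then {0} else Finset.Icc (-(N:ℤ)) (N:ℤ)) with hTdef
  set Φ : (Fin s → ℤ) → ℤ × (Fin s → ℤ) := fun y => (y i0 - m (w y), w y) with hPdef
  set S : Set (Fin s → ℤ) := {y : Fin s → ℤ | (∀ i, |y i| ≤ (N : ℤ)) ∧
      |(∑ i, y i * (a (z i) : ℤ)) + b| ≤ (a (z i0) : ℤ) ∧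
      (∑ i, y i) + d = 0} with hSdef
  have hmaps : ∀ y ∈ S, Φ y ∈ (T : Set (ℤ × (Fin s → ℤ))) := by
    rintro y ⟨hy1, hy2, hy3⟩
    have hk := hkey y hy3
    have h2 : |y i0 * A + B (w y)| ≤ (a (z i0) : ℤ) := by rw [hBw, hk]; exact hy2
    obtain ⟨hlo, hhi⟩ := abs_le.mp h2
    set X : ℤ := -(a (z i0) : ℤ) - B (w y) with hXdef
    have hdm := Int.mul_ediv_add_emod X A
    have hr0 : 0 ≤ X % A := Int.emod_nonneg X (ne_of_gt hApos)
    have hrA : X % A < A := Int.emod_lt_of_pos X hApos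
    have hmXA : m (w y) = X / A := rfl
    have hlow : m (w y) ≤ y i0 := by
      rw [hmXA]
      have h3 : (X / A) * A ≤ y i0 * A := by
        have hcm : A * (X / A) = (X / A) * A := mul_comm _ _
        linarith
      exact le_of_mul_le_mul_right h3 hApos
    have hhiK : y i0 - m (w y) ≤ K := by
      rw [hmXA]
      have hexp : (y i0 - X / A) * A = y i0 * A - (X / A) * A := by ring
      have h5 : (y i0 - X / A) * A < 2 * (a (z i0) : ℤ) + A := by
        have hcm : A * (X / A) = (X / A) * A := mul_comm _ _
        have hXB : X = -(a (z i0) : ℤ) - B (w y) := hXdef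
        linarith
      have h6 : ((y i0 - X / A : ℤ) : ℝ) * (A:ℝ) < 2 * (a (z i0) : ℝ) + A := by
        exact_mod_cast h5
      have h8 : 2 * (a (z i0) : ℝ) < 2 * c / (c-1) * A := by
        rw [div_mul_eq_mul_div, lt_div_iff₀ hc1]; nlinarith
      have h7 : ((y i0 - X / A : ℤ) : ℝ) * (A:ℝ) < (2 * c / (c - 1) + 1) * A := by
        rw [add_mul]; linarith
      have h9 : ((y i0 - X / A : ℤ) : ℝ) < 2 * c / (c - 1) + 1 :=
        lt_of_mul_lt_mul_right h7 hAposR.le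
      have h10 : ((y i0 - X / A : ℤ) : ℝ) < (K : ℝ) := by
        have hce := Int.le_ceil (2 * c / (c - 1))
        rw [hKdef]; push_cast at h9 ⊢; linarith
      have h11 : y i0 - X / A < K := by exact_mod_cast h10
      omega
    rw [hTdef]
    simp only [Finset.coe_product, Set.mem_prod, Finset.mem_coe, Finset.mem_Icc,
      Fintype.mem_piFinset, hPdef]
    refine ⟨⟨by omega, hhiK⟩, fun i => ?_⟩
    by_cases hA0 : i = i0
    · rw [hA0, hw0, if_pos (Or.inl rfl)]; simp
    by_cases hAl : i = il
    · rw [hAl, hwl, if_pos (Or.inr rfl)]; simp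
    · rw [hw_eq y i hA0 hAl, if_neg (by tauto), Finset.mem_Icc]
      have := hy1 i
      rw [abs_le] at this
      exact this
  have hinj : Set.InjOn Φ S := by
    rintro y ⟨hy1, hy2, hy3⟩ y' ⟨hy1', hy2', hy3'⟩ heq
    have h2 : w y = w y' := congrArg Prod.snd heq
    have h1 : y i0 - m (w y) = y' i0 - m (w y') := congrArg Prod.fst heq
    have hmid : ∀ i, i ≠ i0 → i ≠ il → y i = y' i := fun i ha' hb' => by
      have := congrFun h2 i
      rwa [hw_eq y i ha' hb', hw_eq y' i ha' hb'] at this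
    have h0 : y i0 = y' i0 := by rw [h2] at h1; omega
    have hl : y il = y' il := by
      have hsum : ∑ i, y i = ∑ i, y' i := by omega
      have e1 := Finset.add_sum_erase Finset.univ y (Finset.mem_univ il)
      have e2 := Finset.add_sum_erase Finset.univ y' (Finset.mem_univ il)
      have e3 : ∑ i ∈ Finset.univ.erase il, y i = ∑ i ∈ Finset.univ.erase il, y' i := by
        refine Finset.sum_congr rfl fun i hi => ?_
        have hil := Finset.ne_of_mem_erase hi
        by_cases h : i = i0
        · rw [h, h0]
        · exact hmid i h hil
      linarith
    funext i
    by_cases hA' : i = i0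
    · rw [hA', h0]
    by_cases hB' : i = il
    · rw [hB', hl]
    · exact hmid i hA' hB'
  have hfin : (↑T : Set (ℤ × (Fin s → ℤ))).Finite := T.finite_toSet
  have hle := Set.ncard_le_ncard_of_injOn Φ hmaps hinj hfin
  rw [Set.ncard_coe_finset] at hle
  have hTcard : T.card = (K + 1).toNat * (2 * N + 1) ^ (s - 2) := by
    rw [hTdef, Finset.card_product]
    congr 1
    · rw [Int.card_Icc]; congr 1; omega
    · rw [Fintype.card_piFinset]
      have hcards : ∀ i : Fin s,
          (if i = i0 ∨ i = il then ({0}:Finset ℤ) else Finset.Icc (-(N:ℤ)) N).card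
          = if i = i0 ∨ i = il then 1 else (2 * N + 1) := fun i => by
        by_cases h : i = i0 ∨ i = il
        · rw [if_pos h, if_pos h]; simp
        · rw [if_neg h, if_neg h, Int.card_Icc]; omega
      calc (∏ i : Fin s,
            (if i = i0 ∨ i = il then ({0}:Finset ℤ) else Finset.Icc (-(N:ℤ)) N).card)
          = ∏ i : Fin s, (if i = i0 ∨ i = il then 1 else (2 * N + 1)) :=
            Finset.prod_congr rfl fun i _ => hcards i
        _ = ∏ i ∈ Finset.univ.filter (fun i => ¬(i = i0 ∨ i = il)), (2 * N + 1) := by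
            rw [Finset.prod_filter]
            exact Finset.prod_congr rfl fun i _ => by
              by_cases h : i = i0 ∨ i = il <;> simp [h]
        _ = (2 * N + 1) ^ (s - 2) := by
            rw [Finset.prod_const]
            congr 1
            have h1 : Finset.univ.filter (fun i => i = i0 ∨ i = il) = {i0, il} := by
              ext i; simp
            have h2 := Finset.card_filter_add_card_filter_not
              (s := (Finset.univ : Finset (Fin s))) (p := fun i => i = i0 ∨ i = il)
            rw [h1] at h2
            have h3 : ({i0, il} : Finset (Fin s)).card = 2 := by
              rw [Finset.card_insert_of_notMem (by simpa using hne), Finset.card_singleton]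
            rw [h3, Finset.card_univ, Fintype.card_fin] at h2
            omega
  have hNR : (1:ℝ) ≤ (N:ℝ) := by exact_mod_cast hN
  have hfinal : (T.card : ℝ) ≤ ((⌈2 * c / (c - 1)⌉ : ℝ) + 2) * 3 ^ (s - 2) * (N:ℝ) ^ (s - 2) := by
    have htn : (((K + 1).toNat : ℕ) : ℝ) = (K:ℝ) + 1 := by
      have h0 : ((K + 1).toNat : ℤ) = K + 1 := Int.toNat_of_nonneg (by omega)
      exact_mod_cast congrArg (Int.cast : ℤ → ℝ) h0
    rw [hTcard, Nat.cast_mul, htn, Nat.cast_pow]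
    push_cast
    have hKR : ((K:ℝ) + 1) = (⌈2 * c / (c - 1)⌉ : ℝ) + 2 := by rw [hKdef]; push_cast; ring
    have hKRnn : (0:ℝ) ≤ (K:ℝ) + 1 := by
      have : (0:ℝ) ≤ (K:ℝ) := by exact_mod_cast hKnn
      linarith
    calc ((K:ℝ) + 1) * (2 * (N:ℝ) + 1) ^ (s - 2)
        ≤ ((K:ℝ) + 1) * (3 * (N:ℝ)) ^ (s - 2) := by
          apply mul_le_mul_of_nonneg_left _ hKRnn
          exact pow_le_pow_left₀ (by positivity) (by linarith) _
      _ = ((⌈2 * c / (c - 1)⌉ : ℝ) + 2) * 3 ^ (s - 2) * (N:ℝ) ^ (s - 2) := by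
          rw [mul_pow, hKR]; ring
  calc (Set.ncard S : ℝ) ≤ (T.card : ℝ) := by exact_mod_cast hle
    _ ≤ _ := hfinal
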